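/- arXiv:1607.07492 — 3 statements merged into one kernel-verified Lean document; each statement's English description precedes it below -/
import Mathlib

section
/- Let U ⊆ ℝ² be open, f : U → ℝ³ a C² immersion with Gauss map G, and F = P ∘ f; let J : U → ℝ be J(q) = det(DF(q)). Suppose p ∈ U satisfies ⟨G(p), e₃⟩ = 0 (p is a singular point of F) and ∂₁G(p) × ∂₂G(p) ≠ 0 (the Gaussian curvature does not vanish at p). Then DJ(p) ≠ 0. Consequently, if the Gaussian curvature is nonzero at every singular point of F, then F is a good map. -/
open scoped RealInnerProductSpace
noncomputable section

/-- The plane `ℝ²` with the Euclidean norm. -/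
abbrev E2 := EuclideanSpace ℝ (Fin 2)
/-- The space `ℝ³` with the Euclidean norm. -/
abbrev E3 := EuclideanSpace ℝ (Fin 3)

/-- The cross product on `ℝ³`. -/
def cross3 (a b : E3) : E3 :=
  WithLp.toLp 2 ![a 1 * b 2 - a 2 * b 1, a 2 * b 0 - a 0 * b 2, a 0 * b 1 - a 1 * b 0]

/-- The orthogonal projection `P(x₁,x₂,x₃) = (x₁,x₂)`. -/
def proj (x : E3) : E2 := WithLp.toLp 2 ![x 0, x 1]

/-- The vertical unit vector `e₃ = (0,0,1)`. -/
def e₃ : E3 := WithLp.toLp 2 ![0, 0, 1]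

/-- The first coordinate direction of `ℝ²`. -/
def b₁ : E2 := WithLp.toLp 2 ![1, 0]
/-- The second coordinate direction of `ℝ²`. -/
def b₂ : E2 := WithLp.toLp 2 ![0, 1]

/-- The Gauss map of an immersion `f : U → ℝ³`. -/
def gaussMap (f : E2 → E3) (p : E2) : E3 :=
  ‖cross3 (fderiv ℝ f p b₁) (fderiv ℝ f p b₂)‖⁻¹ •
    cross3 (fderiv ℝ f p b₁) (fderiv ℝ f p b₂)

/-! ### Auxiliary lemmas -/

lemma diffAt_comp_proj3 {F : E2 → E3} {p : E2} (h : DifferentiableAt ℝ F p) (i : Fin 3) :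
    DifferentiableAt ℝ (fun q => F q i) p := by
  have h2 : DifferentiableAt ℝ ((EuclideanSpace.proj (𝕜 := ℝ) i) ∘ F) p :=
    (EuclideanSpace.proj i).differentiableAt.comp p h
  exact h2

lemma fderiv_comp_proj3 {F : E2 → E3} {p : E2} (h : DifferentiableAt ℝ F p) (i : Fin 3) (w : E2) :
    fderiv ℝ (fun q => F q i) p w = fderiv ℝ F p w i := by
  have heq : (fun q => F q i) = (EuclideanSpace.proj (𝕜 := ℝ) i) ∘ F := rfl
  rw [heq, fderiv_comp p (EuclideanSpace.proj i).differentiableAt h,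
    ContinuousLinearMap.fderiv]
  rfl

lemma diffAt_pi3 {F : E2 → E3} {p : E2} (h : ∀ i, DifferentiableAt ℝ (fun q => F q i) p) :
    DifferentiableAt ℝ F p := by
  have h2 : DifferentiableAt ℝ
      ((PiLp.continuousLinearEquiv 2 ℝ (fun _ : Fin 3 => ℝ)).symm ∘ (fun q i => F q i)) p :=
    (PiLp.continuousLinearEquiv 2 ℝ (fun _ : Fin 3 => ℝ)).symm.differentiableAt.comp p
      (differentiableAt_pi.2 h)
  exact h2

lemma diffAt_cross {u v : E2 → E3} {p : E2} (hu : DifferentiableAt ℝ u p)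
    (hv : DifferentiableAt ℝ v p) :
    DifferentiableAt ℝ (fun q => cross3 (u q) (v q)) p := by
  apply diffAt_pi3
  intro i
  fin_cases i <;>
    simp only [cross3, Matrix.cons_val_zero, Matrix.cons_val_one, Matrix.head_cons,
      Matrix.cons_val_two, Matrix.tail_cons, Fin.isValue, PiLp.toLp_apply] <;>
    exact ((diffAt_comp_proj3 hu _).mul (diffAt_comp_proj3 hv _)).sub
      ((diffAt_comp_proj3 hu _).mul (diffAt_comp_proj3 hv _))

lemma inner_e3 (x : E3) : ⟪x, e₃⟫ = x 2 := by
  simp [PiLp.inner_apply, e₃, Fin.sum_univ_three, RCLike.inner_apply, conj_trivial]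

lemma inner3 (x y : E3) : ⟪x, y⟫ = x 0 * y 0 + x 1 * y 1 + x 2 * y 2 := by
  simp [PiLp.inner_apply, Fin.sum_univ_three, RCLike.inner_apply, conj_trivial]; ring

/-- The projection as a continuous linear map. -/
def projL : E3 →L[ℝ] E2 :=
  LinearMap.toContinuousLinearMap
    { toFun := proj
      map_add' := by
        intro x y; ext i; fin_cases i <;> simp [proj]
      map_smul' := by
        intro c x; ext i; fin_cases i <;> simp [proj] }

lemma det_eq (f : E2 → E3) (q : E2) (hd : DifferentiableAt ℝ f q) :
    (fderiv ℝ (proj ∘ f) q).det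
      = cross3 (fderiv ℝ f q b₁) (fderiv ℝ f q b₂) 2 := by
  have h1 : fderiv ℝ (proj ∘ f) q = projL.comp (fderiv ℝ f q) := by
    have h2 : proj ∘ f = (projL : E3 → E2) ∘ f := rfl
    rw [h2, fderiv_comp q projL.differentiableAt hd, ContinuousLinearMap.fderiv]
  rw [h1]
  have hb1 : (PiLp.basisFun 2 ℝ (Fin 2)) 0 = b₁ := by
    ext i; fin_cases i <;> simp [b₁, PiLp.basisFun_apply]
  have hb2 : (PiLp.basisFun 2 ℝ (Fin 2)) 1 = b₂ := by
    ext i; fin_cases i <;> simp [b₂, PiLp.basisFun_apply]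
  have hdet : (projL.comp (fderiv ℝ f q)).det
      = (LinearMap.toMatrix (PiLp.basisFun 2 ℝ (Fin 2)) (PiLp.basisFun 2 ℝ (Fin 2))
          ((projL.comp (fderiv ℝ f q)) : E2 →ₗ[ℝ] E2)).det := by
    rw [LinearMap.det_toMatrix]
  rw [hdet, Matrix.det_fin_two]
  simp only [LinearMap.toMatrix_apply, ContinuousLinearMap.coe_coe,
    ContinuousLinearMap.comp_apply, hb1, hb2, PiLp.basisFun_repr]
  show proj (fderiv ℝ f q b₁) 0 * proj (fderiv ℝ f q b₂) 1 -
      proj (fderiv ℝ f q b₂) 0 * proj (fderiv ℝ f q b₁) 1 = _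
  simp [proj, cross3, mul_comm]

lemma exists_smul_of_cross_eq_zero {x y : E3} (h0 : cross3 x y = 0) (hx : x ≠ 0) :
    ∃ t : ℝ, y = t • x := by
  have e0 : x 1 * y 2 - x 2 * y 1 = 0 := by simpa [cross3] using congrArg (fun v : E3 => v 0) h0
  have e1 : x 2 * y 0 - x 0 * y 2 = 0 := by simpa [cross3] using congrArg (fun v : E3 => v 1) h0
  have e2 : x 0 * y 1 - x 1 * y 0 = 0 := by simpa [cross3] using congrArg (fun v : E3 => v 2) h0
  have hcase : x 0 ≠ 0 ∨ x 1 ≠ 0 ∨ x 2 ≠ 0 := by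
    by_contra hcon
    push_neg at hcon
    exact hx (by ext i; fin_cases i <;> simp [hcon.1, hcon.2.1, hcon.2.2])
  rcases hcase with h | h | h
  · refine ⟨y 0 / x 0, PiLp.ext fun i => ?_⟩
    fin_cases i
    · show y 0 = y 0 / x 0 * x 0; field_simp
    · show y 1 = y 0 / x 0 * x 1
      rw [div_mul_eq_mul_div, eq_comm, div_eq_iff h]; linear_combination -e2
    · show y 2 = y 0 / x 0 * x 2
      rw [div_mul_eq_mul_div, eq_comm, div_eq_iff h]; linear_combination e1
  · refine ⟨y 1 / x 1, PiLp.ext fun i => ?_⟩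
    fin_cases i
    · show y 0 = y 1 / x 1 * x 0
      rw [div_mul_eq_mul_div, eq_comm, div_eq_iff h]; linear_combination e2
    · show y 1 = y 1 / x 1 * x 1; field_simp
    · show y 2 = y 1 / x 1 * x 2
      rw [div_mul_eq_mul_div, eq_comm, div_eq_iff h]; linear_combination -e0
  · refine ⟨y 2 / x 2, PiLp.ext fun i => ?_⟩
    fin_cases i
    · show y 0 = y 2 / x 2 * x 0
      rw [div_mul_eq_mul_div, eq_comm, div_eq_iff h]; linear_combination -e1
    · show y 1 = y 2 / x 2 * x 1
      rw [div_mul_eq_mul_div, eq_comm, div_eq_iff h]; linear_combination e0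
    · show y 2 = y 2 / x 2 * x 2; field_simp

lemma cross_ne_zero_of_imm (f : E2 → E3) (p : E2)
    (hinj : Function.Injective (fderiv ℝ f p)) :
    cross3 (fderiv ℝ f p b₁) (fderiv ℝ f p b₂) ≠ 0 := by
  intro h0
  have hx : fderiv ℝ f p b₁ ≠ 0 := by
    intro h
    have h2 : fderiv ℝ f p b₁ = fderiv ℝ f p 0 := by simp [h]
    have := congrArg (fun v : E2 => v 0) (hinj h2)
    simp [b₁] at this
  obtain ⟨t, hyx⟩ := exists_smul_of_cross_eq_zero h0 hx
  have h2 : fderiv ℝ f p b₂ = fderiv ℝ f p (t • b₁) := by rw [map_smul]; exact hyx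
  have := congrArg (fun v : E2 => v 1) (hinj h2)
  simp [b₁, b₂] at this

/-- The key step: at a singular point with nonvanishing curvature, `DJ ≠ 0`. -/
theorem key_good_point (U : Set E2) (hU : IsOpen U) (f : E2 → E3) (hf : ContDiffOn ℝ 2 f U)
    (himm : ∀ p ∈ U, Function.Injective (fderiv ℝ f p))
    (J : E2 → ℝ) (hJ : ∀ q, J q = (fderiv ℝ (proj ∘ f) q).det)
    (p : E2) (hp : p ∈ U)
    (hsing : ⟪gaussMap f p, e₃⟫ = 0)
    (hcurv : cross3 (fderiv ℝ (gaussMap f) p b₁) (fderiv ℝ (gaussMap f) p b₂) ≠ 0) :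
    fderiv ℝ J p ≠ 0 := by
  intro hJ0
  set c : E2 → E3 := fun q => cross3 (fderiv ℝ f q b₁) (fderiv ℝ f q b₂) with hc
  have hUn : U ∈ nhds p := hU.mem_nhds hp
  have hf' : ContDiffOn ℝ 1 (fderiv ℝ f) U := hf.fderiv_of_isOpen hU (by norm_num)
  have hfd : ∀ q ∈ U, DifferentiableAt ℝ f q := fun q hq =>
    ((hf.differentiableOn two_ne_zero) q hq).differentiableAt (hU.mem_nhds hq)
  have hdf : DifferentiableAt ℝ (fderiv ℝ f) p :=
    ((hf'.differentiableOn one_ne_zero) p hp).differentiableAt hUn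
  have hdc : DifferentiableAt ℝ c p :=
    diffAt_cross (hdf.clm_apply (differentiableAt_const _))
      (hdf.clm_apply (differentiableAt_const _))
  have hcp : c p ≠ 0 := cross_ne_zero_of_imm f p (himm p hp)
  have hcpn : ‖c p‖ ≠ 0 := norm_ne_zero_iff.2 hcp
  have hρp : ‖c p‖⁻¹ ≠ 0 := inv_ne_zero hcpn
  have hnorm : DifferentiableAt ℝ (fun q => ‖c q‖) p := DifferentiableAt.norm ℝ hdc hcp
  have hρ : DifferentiableAt ℝ (fun q => ‖c q‖⁻¹) p := hnorm.inv hcpn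
  have hGdef : gaussMap f = fun q => ‖c q‖⁻¹ • c q := rfl
  have hdG : DifferentiableAt ℝ (gaussMap f) p := by
    rw [hGdef]; exact hρ.smul hdc
  have hg2 : gaussMap f p 2 = 0 := by
    have h := hsing; rw [inner_e3] at h; exact h
  have hcp2 : c p 2 = 0 := by
    have h1 : gaussMap f p 2 = ‖c p‖⁻¹ * c p 2 := rfl
    rw [h1] at hg2
    rcases mul_eq_zero.1 hg2 with h | h
    · exact absurd h hρp
    · exact h
  -- `J` agrees with the third component of `c` near `p`
  have hJev : J =ᶠ[nhds p] fun q => c q 2 := by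
    filter_upwards [hUn] with q hq
    rw [hJ q, det_eq f q (hfd q hq)]
  have hfJ : fderiv ℝ (fun q => c q 2) p = 0 := by
    rw [← hJev.fderiv_eq]; exact hJ0
  have hcomp2 : ∀ w : E2, fderiv ℝ c p w 2 = 0 := by
    intro w
    rw [← fderiv_comp_proj3 hdc 2 w, hfJ]
    rfl
  -- the third component of the derivative of the Gauss map vanishes
  have hG2 : ∀ w : E2, fderiv ℝ (gaussMap f) p w 2 = 0 := by
    intro w
    have h1 : fderiv ℝ (gaussMap f) p
        = ‖c p‖⁻¹ • fderiv ℝ c p + (fderiv ℝ (fun q => ‖c q‖⁻¹) p).smulRight (c p) := by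
      rw [hGdef, fderiv_fun_smul hρ hdc]
    have h2 : fderiv ℝ (gaussMap f) p w 2
        = ‖c p‖⁻¹ * fderiv ℝ c p w 2 + fderiv ℝ (fun q => ‖c q‖⁻¹) p w * c p 2 := by
      rw [h1]; rfl
    rw [h2, hcomp2 w, hcp2]; ring
  -- the derivative of the Gauss map is orthogonal to the Gauss map
  have hone : (fun q => (⟪gaussMap f q, gaussMap f q⟫ : ℝ)) =ᶠ[nhds p] fun _ => (1 : ℝ) := by
    filter_upwards [hdc.continuousAt.eventually_ne hcp] with q hq
    rw [real_inner_self_eq_norm_sq]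
    have hn1 : ‖gaussMap f q‖ = 1 := by
      rw [hGdef]
      show ‖‖c q‖⁻¹ • c q‖ = 1
      rw [norm_smul, norm_inv, norm_norm]
      exact inv_mul_cancel₀ (norm_ne_zero_iff.2 hq)
    rw [hn1]; norm_num
  have hfn : fderiv ℝ (fun q => (⟪gaussMap f q, gaussMap f q⟫ : ℝ)) p = 0 := by
    rw [hone.fderiv_eq]; simp
  have horth : ∀ w : E2, ⟪fderiv ℝ (gaussMap f) p w, gaussMap f p⟫ = 0 := by
    intro w
    have h := fderiv_inner_apply ℝ hdG hdG w
    rw [hfn] at h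
    have h0 : (0 : ℝ) = ⟪gaussMap f p, fderiv ℝ (gaussMap f) p w⟫
        + ⟪fderiv ℝ (gaussMap f) p w, gaussMap f p⟫ := by simpa using h
    linarith [h0, real_inner_comm (gaussMap f p) (fderiv ℝ (gaussMap f) p w)]
  -- final algebra
  set a : E3 := fderiv ℝ (gaussMap f) p b₁ with hadef
  set b : E3 := fderiv ℝ (gaussMap f) p b₂ with hbdef
  set g : E3 := gaussMap f p with hgdef
  have ha2 : a 2 = 0 := hG2 b₁
  have hb2 : b 2 = 0 := hG2 b₂
  have hag : a 0 * g 0 + a 1 * g 1 + a 2 * g 2 = 0 := by rw [← inner3]; exact horth b₁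
  have hbg : b 0 * g 0 + b 1 * g 1 + b 2 * g 2 = 0 := by rw [← inner3]; exact horth b₂
  have hd : a 0 * b 1 - a 1 * b 0 ≠ 0 := by
    intro hdeq
    apply hcurv
    ext i; fin_cases i <;> simp [cross3, ha2, hb2]
    linarith
  have hg0 : g 0 = 0 := by
    have h : (a 0 * b 1 - a 1 * b 0) * g 0 = 0 := by
      linear_combination (b 1) * hag - (a 1) * hbg + (-(b 1) * g 2) * ha2 + ((a 1) * g 2) * hb2
    rcases mul_eq_zero.1 h with h | h
    · exact absurd h hd
    · exact h
  have hg1 : g 1 = 0 := by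
    have h : (a 0 * b 1 - a 1 * b 0) * g 1 = 0 := by
      linear_combination (a 0) * hbg - (b 0) * hag + ((b 0) * g 2) * ha2 + (-(a 0) * g 2) * hb2
    rcases mul_eq_zero.1 h with h | h
    · exact absurd h hd
    · exact h
  have hgz : g = 0 := by
    ext i; fin_cases i
    · exact hg0
    · exact hg1
    · exact hg2
  have hgne : g ≠ 0 := by
    have h1 : g = ‖c p‖⁻¹ • c p := rfl
    rw [h1]
    exact smul_ne_zero hρp hcp
  exact hgne hgz

/-- Let `U ⊆ ℝ²` be open, `f : U → ℝ³` a `C²` immersion with Gauss map `G`, `F = P ∘ f`,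
and `J(q) = det(DF(q))`.  If `p ∈ U` is a singular point of `F` (i.e. `⟨G(p), e₃⟩ = 0`)
at which the Gaussian curvature does not vanish (i.e. `∂₁G(p) × ∂₂G(p) ≠ 0`), then
`DJ(p) ≠ 0`.  Consequently, if the Gaussian curvature is nonzero at every singular point
of `F`, then `F` is a good map. -/
theorem good_point_of_nonzero_curvature
    (U : Set E2) (hU : IsOpen U) (f : E2 → E3) (hf : ContDiffOn ℝ 2 f U)
    (himm : ∀ p ∈ U, Function.Injective (fderiv ℝ f p))
    (J : E2 → ℝ) (hJ : ∀ q, J q = (fderiv ℝ (proj ∘ f) q).det)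
    (p : E2) (hp : p ∈ U)
    (hsing : ⟪gaussMap f p, e₃⟫ = 0)
    (hcurv : cross3 (fderiv ℝ (gaussMap f) p b₁) (fderiv ℝ (gaussMap f) p b₂) ≠ 0) :
    fderiv ℝ J p ≠ 0 ∧
    ((∀ q ∈ U, J q = 0 →
        cross3 (fderiv ℝ (gaussMap f) q b₁) (fderiv ℝ (gaussMap f) q b₂) ≠ 0) →
      ∀ q ∈ U, J q = 0 → fderiv ℝ J q ≠ 0) := by
  constructor
  · exact key_good_point U hU f hf himm J hJ p hp hsing hcurv
  · intro H q hq hJq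
    have hfdq : DifferentiableAt ℝ f q :=
      ((hf.differentiableOn two_ne_zero) q hq).differentiableAt (hU.mem_nhds hq)
    have hc2 : cross3 (fderiv ℝ f q b₁) (fderiv ℝ f q b₂) 2 = 0 := by
      rw [← det_eq f q hfdq, ← hJ q]; exact hJq
    have hsingq : ⟪gaussMap f q, e₃⟫ = 0 := by
      rw [inner_e3]
      show ‖cross3 (fderiv ℝ f q b₁) (fderiv ℝ f q b₂)‖⁻¹
          * cross3 (fderiv ℝ f q b₁) (fderiv ℝ f q b₂) 2 = 0
      rw [hc2, mul_zero]
    exact key_good_point U hU f hf himm J hJ q hq hsingq (H q hq hJq)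
end
end

section
/- Let γ : ℝ → ℝ² be a C², T-periodic curve with ‖γ'(t)‖ = 1 for all t, let η(t) = (−γ'₂(t), γ'₁(t)) be its unit normal, let y : ℝ → ℝ be C² and T-periodic, and set Γ(t) = (γ₁(t), γ₂(t), y(t)) ∈ ℝ³ and G(t) = (η₁(t), η₂(t), 0). Then the total geodesic curvature of Γ with respect to the horizontal unit normal field G vanishes: ∫₀ᵀ ⟨Γ'(t) × Γ''(t), G(t)⟩ / (1 + y'(t)²) dt = 0. (This is the statement that a closed singular curve without cusp points has zero total geodesic curvature.) -/
open scoped RealInnerProductSpace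
noncomputable section

private lemma hasDerivAt_E3 (F : ℝ → Fin 3 → ℝ) (v : Fin 3 → ℝ) (t : ℝ)
    (h : HasDerivAt F v t) (Γ : ℝ → E3) (hΓ : ∀ s, Γ s = F s) :
    HasDerivAt Γ (WithLp.toLp 2 v : E3) t := by
  have h2 := ((EuclideanSpace.equiv (Fin 3) ℝ).symm.toContinuousLinearMap.hasFDerivAt).comp_hasDerivAt t h
  exact h2.congr_of_eventuallyEq (by filter_upwards with s; rw [Function.comp_apply, ← hΓ s]; rfl)

/-- Let `γ : ℝ → ℝ²` be a `C²`, `T`-periodic unit-speed curve with unit normal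
`η = (−γ'₂, γ'₁)`, let `y : ℝ → ℝ` be `C²` and `T`-periodic, and set
`Γ(t) = (γ₁(t), γ₂(t), y(t))` and `G(t) = (η₁(t), η₂(t), 0)`.  Then the total geodesic
curvature of `Γ` with respect to the horizontal unit normal field `G` vanishes:
`∫₀ᵀ ⟨Γ' × Γ'', G⟩ / (1 + y'²) dt = 0`.  (A closed singular curve without cusp points
has zero total geodesic curvature.) -/
theorem total_geodesic_curvature_zero_without_cusps
    (T : ℝ) (γ : ℝ → E2) (hγ : ContDiff ℝ 2 γ) (hper : Function.Periodic γ T)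
    (hunit : ∀ t, ‖deriv γ t‖ = 1)
    (y : ℝ → ℝ) (hy : ContDiff ℝ 2 y) (hyper : Function.Periodic y T)
    (Γ : ℝ → E3) (hΓ : ∀ t, Γ t = ![(γ t) 0, (γ t) 1, y t])
    (G : ℝ → E3) (hG : ∀ t, G t = ![-((deriv γ t) 1), (deriv γ t) 0, 0]) :
    ∫ t in (0:ℝ)..T,
      ⟪cross3 (deriv Γ t) (deriv (deriv Γ) t), G t⟫ / (1 + (deriv y t) ^ 2) = 0 := by
  have h21 : (2 : WithTop ℕ∞) = 1 + 1 := by norm_num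
  have h10 : (1 : WithTop ℕ∞) = 0 + 1 := by norm_num
  have hγd : Differentiable ℝ γ := hγ.differentiable (by norm_num)
  have hγ' : ContDiff ℝ 1 (deriv γ) := by
    rw [h21, contDiff_succ_iff_deriv] at hγ; exact hγ.2.2
  have hγ'd : Differentiable ℝ (deriv γ) := hγ'.differentiable one_ne_zero
  have hyd : Differentiable ℝ y := hy.differentiable (by norm_num)
  have hy' : ContDiff ℝ 1 (deriv y) := by
    rw [h21, contDiff_succ_iff_deriv] at hy; exact hy.2.2
  have hy'd : Differentiable ℝ (deriv y) := hy'.differentiable one_ne_zero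
  have hy'' : Continuous (deriv (deriv y)) := by
    rw [h10, contDiff_succ_iff_deriv] at hy'
    exact hy'.2.2.continuous
  have hcomp : ∀ (f : ℝ → E2), Differentiable ℝ f → ∀ (i : Fin 2) (t : ℝ),
      HasDerivAt (fun s => f s i) (deriv f t i) t := by
    intro f hf i t
    exact (EuclideanSpace.proj i).hasFDerivAt.comp_hasDerivAt t (hf t).hasDerivAt
  -- derivative of Γ
  have hΓ' : ∀ t, HasDerivAt Γ (WithLp.toLp 2 (![deriv γ t 0, deriv γ t 1, deriv y t] : Fin 3 → ℝ) : E3) t := by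
    intro t
    refine hasDerivAt_E3 (fun s => ![(γ s) 0, (γ s) 1, y s]) _ t ?_ Γ hΓ
    rw [hasDerivAt_pi]
    intro i
    fin_cases i
    · exact hcomp γ hγd 0 t
    · exact hcomp γ hγd 1 t
    · exact (hyd t).hasDerivAt
  have hΓd1 : ∀ t, deriv Γ t = (WithLp.toLp 2 ![deriv γ t 0, deriv γ t 1, deriv y t] : E3) :=
    fun t => (hΓ' t).deriv
  have hΓ'' : ∀ t, deriv (deriv Γ) t
      = (WithLp.toLp 2 ![deriv (deriv γ) t 0, deriv (deriv γ) t 1, deriv (deriv y) t] : E3) := by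
    intro t
    have h2 : HasDerivAt (deriv Γ)
        (WithLp.toLp 2 (![deriv (deriv γ) t 0, deriv (deriv γ) t 1, deriv (deriv y) t] : Fin 3 → ℝ) : E3) t := by
      refine hasDerivAt_E3 (fun s => ![deriv γ s 0, deriv γ s 1, deriv y s]) _ t ?_ _ (fun s => by rw [hΓd1 s])
      rw [hasDerivAt_pi]
      intro i
      fin_cases i
      · exact hcomp (deriv γ) hγ'd 0 t
      · exact hcomp (deriv γ) hγ'd 1 t
      · exact (hy'd t).hasDerivAt
    exact h2.deriv
  -- unit speed identities
  have hsum : ∀ t, (deriv γ t 0) ^ 2 + (deriv γ t 1) ^ 2 = 1 := by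
    intro t
    have h := hunit t
    rw [EuclideanSpace.norm_eq, Real.sqrt_eq_one] at h
    simpa [Fin.sum_univ_two, Real.norm_eq_abs, sq_abs] using h
  have hortho : ∀ t, deriv γ t 0 * deriv (deriv γ) t 0
      + deriv γ t 1 * deriv (deriv γ) t 1 = 0 := by
    intro t
    have h1 : HasDerivAt (fun s => (deriv γ s 0) ^ 2 + (deriv γ s 1) ^ 2)
        (2 * deriv γ t 0 * deriv (deriv γ) t 0 + 2 * deriv γ t 1 * deriv (deriv γ) t 1) t := by
      have a := ((hcomp (deriv γ) hγ'd 0 t).pow 2)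
      have b := ((hcomp (deriv γ) hγ'd 1 t).pow 2)
      have := a.add b
      exact this.congr_deriv (by ring)
    have h2 : HasDerivAt (fun _ : ℝ => (1:ℝ)) 0 t := hasDerivAt_const t 1
    have h3 := h2.congr_of_eventuallyEq (by filter_upwards with s using hsum s)
    have := h1.unique h3
    linarith
  -- pointwise value of the integrand
  have hval : ∀ t, ⟪cross3 (deriv Γ t) (deriv (deriv Γ) t), G t⟫ / (1 + (deriv y t) ^ 2)
      = -(deriv (deriv y) t / (1 + (deriv y t) ^ 2)) := by
    intro t
    rw [hΓd1 t, hΓ'' t, show G t = WithLp.toLp 2 (G t).ofLp from rfl, hG t]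
    have hs := hsum t
    have ho := hortho t
    simp only [cross3, PiLp.toLp_apply, WithLp.ofLp_toLp, PiLp.inner_apply, RCLike.inner_apply, conj_trivial, Fin.sum_univ_three,
      Matrix.cons_val_zero, Matrix.cons_val_one, Matrix.head_cons, Matrix.cons_val_two,
      Matrix.tail_cons]
    rw [← neg_div]
    congr 1
    linear_combination (-(deriv (deriv y) t)) * hs + (deriv y t) * ho
  rw [intervalIntegral.integral_congr (g := fun t => -(deriv (deriv y) t / (1 + (deriv y t) ^ 2)))
      (fun t _ => hval t)]
  have hF : ∀ t ∈ Set.uIcc (0:ℝ) T, HasDerivAt (fun s => -Real.arctan (deriv y s))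
      (-(deriv (deriv y) t / (1 + (deriv y t) ^ 2))) t := by
    intro t _
    have h1 := (Real.hasDerivAt_arctan (deriv y t)).comp t (hy'd t).hasDerivAt
    have := h1.neg
    exact this.congr_deriv (by ring)
  have hint : IntervalIntegrable (fun t => -(deriv (deriv y) t / (1 + (deriv y t) ^ 2)))
      MeasureTheory.volume 0 T := by
    apply Continuous.intervalIntegrable
    exact (hy''.div (by fun_prop) (fun t => by positivity)).neg
  rw [intervalIntegral.integral_eq_sub_of_hasDerivAt hF hint]
  have hperiod : deriv y T = deriv y 0 := by
    have h1 : deriv (fun x => y (x + T)) 0 = deriv y (0 + T) := deriv_comp_add_const y T 0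
    simp only [zero_add] at h1
    rw [← h1]
    congr 1
    funext x
    exact hyper x
  rw [hperiod]
  ring
end
end

section
/- Let X be a compact topological space, A ⊆ X a closed subset, and F : X → ℝ² a continuous map such that F is an open map on the complement of A (i.e. for every open set V ⊆ X with V ⊆ X \ A, the image F(V) is open in ℝ²). Then the topological frontier of the image F(X) is contained in F(A): frontier(F(X)) ⊆ F(A). (Applied to the projection P of a compact piece Ω of a surface with singular set contained in ∂Ω, this gives ∂P(Ω) ⊆ P(∂Ω).) -/
noncomputable section

/-- Let `X` be a compact topological space, `A ⊆ X` closed, and `F : X → ℝ²` a continuous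
map that is open on the complement of `A`.  Then the topological frontier of the image
`F(X)` is contained in `F(A)`.  (Applied to the projection `P` of a compact piece `Ω` of a
surface with singular set contained in `∂Ω`, this gives `∂P(Ω) ⊆ P(∂Ω)`.) -/
theorem frontier_image_subset_image_of_openOn_compl
    (X : Type*) [TopologicalSpace X] [CompactSpace X]
    (A : Set X) (hA : IsClosed A) (F : X → E2) (hF : Continuous F)
    (hopen : ∀ V : Set X, IsOpen V → V ⊆ Aᶜ → IsOpen (F '' V)) :
    frontier (Set.range F) ⊆ F '' A := by
  have hrange_closed : IsClosed (Set.range F) :=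
    (isCompact_range hF).isClosed
  have hFA_closed : IsClosed (F '' A) :=
    ((hA.isCompact).image hF).isClosed
  intro y hy
  by_contra hyA
  -- y is in range F since range F is closed
  have hy_mem : y ∈ Set.range F := by
    have := hy.1
    rwa [hrange_closed.closure_eq] at this
  obtain ⟨x, hx⟩ := hy_mem
  -- the open set V
  set V : Set X := F ⁻¹' (F '' A)ᶜ with hV
  have hVopen : IsOpen V := hFA_closed.isOpen_compl.preimage hF
  have hVsub : V ⊆ Aᶜ := by
    intro z hz hzA
    exact hz (Set.mem_image_of_mem F hzA)
  have himage : IsOpen (F '' V) := hopen V hVopen hVsub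
  have hxV : x ∈ V := by
    simpa [hV, hx] using hyA
  have hy_int : y ∈ interior (Set.range F) := by
    apply interior_mono (Set.image_subset_range F V)  -- F '' V ⊆ range F
    rw [himage.interior_eq]
    exact ⟨x, hxV, hx⟩
  exact hy.2 hy_int
end
end
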